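/- arXiv:1411.1457 — 2 statements merged into one kernel-verified Lean document; each statement's English description precedes it below -/
import Mathlib

section
/- Let X be a set and let ν be a real-valued function on the group of bijections of X satisfying: ν(g) ≥ 0 for all g, ν(gh) ≤ ν(g) + ν(h) for all g, h, and ν(g⁻¹) = ν(g) for all g. Let φ, ψ be bijections of X and C_φ, C_ψ ≥ 0 constants such that ν(φ g φ⁻¹) ≤ C_φ·ν(g) and ν(ψ g ψ⁻¹) ≤ C_ψ·ν(g) for all bijections g. Suppose U ⊆ X is a subset with φ(x) = x and ψ(x) = x for every x ∉ U, and θ is a bijection of X with θ(U) ∩ U = ∅. Then ν(φψφ⁻¹ψ⁻¹) ≤ (C_φ + 1)(C_ψ + 1)·ν(θ). -/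
section Aux

variable {X : Type*} (U : Set X)

private lemma perm_maps (φ : Equiv.Perm X) (hφU : ∀ x ∉ U, φ x = x) :
    ∀ x ∈ U, φ x ∈ U := by
  intro x hx
  by_contra h
  have := hφU _ h
  have : x = φ x := φ.injective this.symm
  exact h (this ▸ hx)

private lemma perm_inv_fix (φ : Equiv.Perm X) (hφU : ∀ x ∉ U, φ x = x) :
    ∀ x ∉ U, φ⁻¹ x = x := by
  intro x hx
  have := hφU x hx
  calc φ⁻¹ x = φ⁻¹ (φ x) := by rw [this]
  _ = x := φ.symm_apply_apply x

end Aux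

/-- The Eliashberg–Polterovich commutator estimate: if `ν` is a nonnegative, subadditive,
symmetric function on the group of bijections of `X`, quasi-invariant under conjugation by
`φ` and `ψ` with constants `C_φ, C_ψ ≥ 0`, `φ` and `ψ` are supported in `U ⊆ X`, and the
bijection `θ` displaces `U` (i.e. `θ(U) ∩ U = ∅`), then
`ν([φ,ψ]) ≤ (C_φ + 1)(C_ψ + 1) ν(θ)`. -/
theorem commutator_estimate {X : Type*} (ν : Equiv.Perm X → ℝ)
    (hpos : ∀ g, 0 ≤ ν g)
    (hsub : ∀ g h, ν (g * h) ≤ ν g + ν h)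
    (hsymm : ∀ g, ν g⁻¹ = ν g)
    (φ ψ : Equiv.Perm X) (Cφ Cψ : ℝ) (hCφ : 0 ≤ Cφ) (hCψ : 0 ≤ Cψ)
    (hφ : ∀ g, ν (φ * g * φ⁻¹) ≤ Cφ * ν g)
    (hψ : ∀ g, ν (ψ * g * ψ⁻¹) ≤ Cψ * ν g)
    (U : Set X)
    (hφU : ∀ x ∉ U, φ x = x) (hψU : ∀ x ∉ U, ψ x = x)
    (θ : Equiv.Perm X) (hθ : (⇑θ '' U) ∩ U = ∅) :
    ν (φ * ψ * φ⁻¹ * ψ⁻¹) ≤ (Cφ + 1) * (Cψ + 1) * ν θ := by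
  set ψ' : Equiv.Perm X := θ * ψ⁻¹ * θ⁻¹ with hψ'
  have hdisj : ∀ x, x ∈ U → θ x ∉ U := by
    intro x hx hc
    exact Set.eq_empty_iff_forall_notMem.mp hθ (θ x) ⟨⟨x, hx, rfl⟩, hc⟩
  -- ψ' fixes points not in θ '' U
  have hψ'fix : ∀ x, x ∉ (⇑θ '' U) → ψ' x = x := by
    intro x hx
    have h1 : θ⁻¹ x ∉ U := by
      intro h
      exact hx ⟨θ⁻¹ x, h, θ.apply_symm_apply x⟩
    have h2 : ψ⁻¹ (θ⁻¹ x) = θ⁻¹ x := perm_inv_fix U ψ hψU _ h1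
    show θ (ψ⁻¹ (θ⁻¹ x)) = x
    rw [h2]; exact θ.apply_symm_apply x
  -- ψ' maps θ '' U into θ '' U
  have hψ'maps : ∀ x ∈ (⇑θ '' U), ψ' x ∈ (⇑θ '' U) := by
    rintro x ⟨y, hy, rfl⟩
    refine ⟨ψ⁻¹ y, perm_maps U ψ⁻¹ (perm_inv_fix U ψ hψU) y hy, ?_⟩
    have : ψ' (θ y) = θ (ψ⁻¹ y) := by
      show θ (ψ⁻¹ (θ⁻¹ (θ y))) = θ (ψ⁻¹ y)
      simp
    exact this.symm
  -- φ and ψ' commute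
  have hcomm : φ * ψ' = ψ' * φ := by
    ext x
    show φ (ψ' x) = ψ' (φ x)
    by_cases hx : x ∈ U
    · have hxθ : x ∉ (⇑θ '' U) := by
        rintro ⟨y, hy, rfl⟩
        exact hdisj y hy hx
      have hfx : φ x ∉ (⇑θ '' U) := by
        rintro ⟨y, hy, h⟩
        exact hdisj y hy (h ▸ perm_maps U φ hφU x hx)
      rw [hψ'fix x hxθ, hψ'fix (φ x) hfx]
    · rw [hφU x hx]
      by_cases hxθ : x ∈ (⇑θ '' U)
      · have : ψ' x ∉ U := by
          have := hψ'maps x hxθ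
          rcases this with ⟨y, hy, h⟩
          exact h ▸ fun hc => hdisj y hy hc
        rw [hφU _ this]
      · rw [hψ'fix x hxθ, hφU x hx]
  -- [φ, ψψ'] = [φ, ψ]
  have c2 : ψ' * φ⁻¹ = φ⁻¹ * ψ' := by
    have h := congrArg (fun g => φ⁻¹ * g * φ⁻¹) hcomm
    simpa [mul_assoc] using h
  have key : φ * (ψ * ψ') * φ⁻¹ * (ψ * ψ')⁻¹ = φ * ψ * φ⁻¹ * ψ⁻¹ := by
    calc φ * (ψ * ψ') * φ⁻¹ * (ψ * ψ')⁻¹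
        = φ * ψ * (ψ' * φ⁻¹) * ψ'⁻¹ * ψ⁻¹ := by rw [mul_inv_rev]; group
      _ = φ * ψ * (φ⁻¹ * ψ') * ψ'⁻¹ * ψ⁻¹ := by rw [c2]
      _ = φ * ψ * φ⁻¹ * ψ⁻¹ := by group
  have h1 : ν (φ * ψ * φ⁻¹ * ψ⁻¹) ≤ (Cφ + 1) * ν (ψ * ψ') := by
    rw [← key]
    calc ν (φ * (ψ * ψ') * φ⁻¹ * (ψ * ψ')⁻¹)
        ≤ ν (φ * (ψ * ψ') * φ⁻¹) + ν (ψ * ψ')⁻¹ := hsub _ _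
      _ ≤ Cφ * ν (ψ * ψ') + ν (ψ * ψ') := by
          rw [hsymm]; exact add_le_add_left (hφ _) _
      _ = (Cφ + 1) * ν (ψ * ψ') := by ring
  have h2 : ν (ψ * ψ') ≤ (Cψ + 1) * ν θ := by
    have : ψ * ψ' = (ψ * θ * ψ⁻¹) * θ⁻¹ := by rw [hψ']; group
    rw [this]
    calc ν ((ψ * θ * ψ⁻¹) * θ⁻¹) ≤ ν (ψ * θ * ψ⁻¹) + ν θ⁻¹ := hsub _ _
      _ ≤ Cψ * ν θ + ν θ := by rw [hsymm]; exact add_le_add_left (hψ _) _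
      _ = (Cψ + 1) * ν θ := by ring
  calc ν (φ * ψ * φ⁻¹ * ψ⁻¹) ≤ (Cφ + 1) * ν (ψ * ψ') := h1
    _ ≤ (Cφ + 1) * ((Cψ + 1) * ν θ) := by
        apply mul_le_mul_of_nonneg_left h2 (by linarith)
      _ = (Cφ + 1) * (Cψ + 1) * ν θ := by ring
end

section
/- Let N be a nonempty compact topological space, F, G : [0,1] × N → ℝ continuous, and τ₁, τ₂ : [0,1] → [0,1] continuously differentiable functions with τ_j(0) = 0, τ_j(1) = 1, τ_j'(t) ≥ 0 for all t (j = 1, 2), τ₁'(t) = 0 for t ∈ [0, 1/2], and τ₂'(t) = 0 for t ∈ [1/2, 1]. Define H : [0,1] × N → ℝ by H(t,x) = τ₂'(t)·G(τ₂(t), x) + τ₁'(t)·F(τ₁(t), x). Then ∫₀¹ max_{x∈N} |H(t,x)| dt ≤ ∫₀¹ max_{x∈N} |F(t,x)| dt + ∫₀¹ max_{x∈N} |G(t,x)| dt. -/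
open Set MeasureTheory intervalIntegral

/-- Continuity of the sup of absolute values over a compact fiber. -/
lemma sup_abs_continuous_aux {N : Type*} [TopologicalSpace N] [CompactSpace N]
    [Nonempty N] (F : ℝ → N → ℝ) (hF : Continuous fun p : ℝ × N => F p.1 p.2) :
    Continuous fun t => ⨆ x, |F t x| := by
  have key : ∀ t, (⨆ x, |F t x|) = ‖(ContinuousMap.curry ⟨_, hF⟩ : C(ℝ, C(N, ℝ))) t‖ := by
    intro t
    rw [ContinuousMap.norm_eq_iSup_norm]
    simp [Real.norm_eq_abs, ContinuousMap.curry]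
  simp_rw [key]
  exact (ContinuousMap.curry ⟨_, hF⟩).continuous.norm

/-- For a nonempty compact space `N`, continuous `F, G : [0,1] × N → ℝ` and `C¹`
reparametrizations `τ₁, τ₂ : [0,1] → [0,1]` with `τ_j(0) = 0`, `τ_j(1) = 1`, `τ_j' ≥ 0`,
`τ₁' = 0` on `[0,1/2]` and `τ₂' = 0` on `[1/2,1]`, the concatenated Hamiltonian
`H(t,x) = τ₂'(t) G(τ₂(t),x) + τ₁'(t) F(τ₁(t),x)` satisfies
`∫₀¹ max_{x∈N} |H(t,x)| dt ≤ ∫₀¹ max_{x∈N} |F(t,x)| dt + ∫₀¹ max_{x∈N} |G(t,x)| dt`. -/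
theorem concatenation_triangle_inequality {N : Type*} [TopologicalSpace N] [CompactSpace N]
    [Nonempty N] (F G : ℝ → N → ℝ)
    (hF : Continuous fun p : ℝ × N => F p.1 p.2)
    (hG : Continuous fun p : ℝ × N => G p.1 p.2)
    (τ₁ τ₂ τ₁' τ₂' : ℝ → ℝ)
    (hderiv₁ : ∀ t ∈ Set.Icc (0:ℝ) 1, HasDerivAt τ₁ (τ₁' t) t)
    (hderiv₂ : ∀ t ∈ Set.Icc (0:ℝ) 1, HasDerivAt τ₂ (τ₂' t) t)
    (hcont₁ : ContinuousOn τ₁' (Set.Icc (0:ℝ) 1))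
    (hcont₂ : ContinuousOn τ₂' (Set.Icc (0:ℝ) 1))
    (hτ₁0 : τ₁ 0 = 0) (hτ₁1 : τ₁ 1 = 1) (hτ₂0 : τ₂ 0 = 0) (hτ₂1 : τ₂ 1 = 1)
    (hnonneg₁ : ∀ t ∈ Set.Icc (0:ℝ) 1, 0 ≤ τ₁' t)
    (hnonneg₂ : ∀ t ∈ Set.Icc (0:ℝ) 1, 0 ≤ τ₂' t)
    (hsupp₁ : ∀ t ∈ Set.Icc (0:ℝ) (1/2), τ₁' t = 0)
    (hsupp₂ : ∀ t ∈ Set.Icc (1/2:ℝ) 1, τ₂' t = 0)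
    (H : ℝ → N → ℝ)
    (hHdef : ∀ t x, H t x = τ₂' t * G (τ₂ t) x + τ₁' t * F (τ₁ t) x) :
    (∫ t in (0:ℝ)..1, ⨆ x, |H t x|) ≤
      (∫ t in (0:ℝ)..1, ⨆ x, |F t x|) + ∫ t in (0:ℝ)..1, ⨆ x, |G t x| := by
  have gcont : Continuous fun s => ⨆ x, |G s x| := sup_abs_continuous_aux G hG
  have fcont : Continuous fun s => ⨆ x, |F s x| := sup_abs_continuous_aux F hF
  have h1 : (1:ℝ)/2 ≤ 1 := by norm_num
  have h0 : (0:ℝ) ≤ 1/2 := by norm_num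
  have hsub1 : Icc (0:ℝ) (1/2) ⊆ Icc 0 1 := Icc_subset_Icc le_rfl h1
  have hsub2 : Icc ((1:ℝ)/2) 1 ⊆ Icc 0 1 := Icc_subset_Icc h0 le_rfl
  -- τ₁ is 0 at 1/2, τ₂ is 1 at 1/2
  have hτ₁half : τ₁ (1/2) = 0 := by
    have := constant_of_has_deriv_right_zero (f := τ₁) (a := 0) (b := 1/2)
      (fun t ht => ((hderiv₁ t (hsub1 ht)).continuousAt).continuousWithinAt)
      (fun t ht => by
        have := (hderiv₁ t (hsub1 (Ico_subset_Icc_self ht))).hasDerivWithinAt (s := Ici t)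
        rwa [hsupp₁ t (Ico_subset_Icc_self ht)] at this)
      (1/2) (right_mem_Icc.2 h0)
    rw [this, hτ₁0]
  have hτ₂half : τ₂ (1/2) = 1 := by
    have := constant_of_has_deriv_right_zero (f := τ₂) (a := 1/2) (b := 1)
      (fun t ht => ((hderiv₂ t (hsub2 ht)).continuousAt).continuousWithinAt)
      (fun t ht => by
        have := (hderiv₂ t (hsub2 (Ico_subset_Icc_self ht))).hasDerivWithinAt (s := Ici t)
        rwa [hsupp₂ t (Ico_subset_Icc_self ht)] at this)
      1 (right_mem_Icc.2 h1)
    rw [← this, hτ₂1]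
  -- pointwise identities on the two halves
  have hEq1 : EqOn (fun t => ⨆ x, |H t x|) (fun t => τ₂' t * ⨆ x, |G (τ₂ t) x|)
      (uIcc (0:ℝ) (1/2)) := by
    intro t ht
    rw [uIcc_of_le h0] at ht
    have hz : τ₁' t = 0 := hsupp₁ t ht
    have hnn : 0 ≤ τ₂' t := hnonneg₂ t (hsub1 ht)
    simp only [hHdef, hz, zero_mul, add_zero]
    rw [Real.mul_iSup_of_nonneg hnn]
    congr 1; funext x; rw [abs_mul, abs_of_nonneg hnn]
  have hEq2 : EqOn (fun t => ⨆ x, |H t x|) (fun t => τ₁' t * ⨆ x, |F (τ₁ t) x|)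
      (uIcc ((1:ℝ)/2) 1) := by
    intro t ht
    rw [uIcc_of_le h1] at ht
    have hz : τ₂' t = 0 := hsupp₂ t ht
    have hnn : 0 ≤ τ₁' t := hnonneg₁ t (hsub2 ht)
    simp only [hHdef, hz, zero_mul, zero_add]
    rw [Real.mul_iSup_of_nonneg hnn]
    congr 1; funext x; rw [abs_mul, abs_of_nonneg hnn]
  -- continuity of the substituted integrands
  have hτ₂cont : ContinuousOn τ₂ (Icc (0:ℝ) 1) :=
    fun t ht => ((hderiv₂ t ht).continuousAt).continuousWithinAt
  have hτ₁cont : ContinuousOn τ₁ (Icc (0:ℝ) 1) :=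
    fun t ht => ((hderiv₁ t ht).continuousAt).continuousWithinAt
  have c1 : ContinuousOn (fun t => τ₂' t * ⨆ x, |G (τ₂ t) x|) (uIcc (0:ℝ) (1/2)) := by
    rw [uIcc_of_le h0]
    exact (hcont₂.mono hsub1).mul (gcont.comp_continuousOn (hτ₂cont.mono hsub1))
  have c2 : ContinuousOn (fun t => τ₁' t * ⨆ x, |F (τ₁ t) x|) (uIcc ((1:ℝ)/2) 1) := by
    rw [uIcc_of_le h1]
    exact (hcont₁.mono hsub2).mul (fcont.comp_continuousOn (hτ₁cont.mono hsub2))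
  -- interval integrability of the sup of |H| on each half
  have int1 : IntervalIntegrable (fun t => ⨆ x, |H t x|) volume 0 (1/2) :=
    (c1.intervalIntegrable).congr_ae
      (Filter.EventuallyEq.symm
        ((ae_restrict_iff' measurableSet_uIoc).2
          (Filter.Eventually.of_forall fun t ht =>
            hEq1 (uIoc_subset_uIcc ht))))
  have int2 : IntervalIntegrable (fun t => ⨆ x, |H t x|) volume (1/2) 1 :=
    (c2.intervalIntegrable).congr_ae
      (Filter.EventuallyEq.symm
        ((ae_restrict_iff' measurableSet_uIoc).2
          (Filter.Eventually.of_forall fun t ht =>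
            hEq2 (uIoc_subset_uIcc ht))))
  -- split the integral
  have hsplit : (∫ t in (0:ℝ)..1, ⨆ x, |H t x|) =
      (∫ t in (0:ℝ)..(1/2), ⨆ x, |H t x|) + ∫ t in ((1:ℝ)/2)..1, ⨆ x, |H t x| :=
    (intervalIntegral.integral_add_adjacent_intervals int1 int2).symm
  -- evaluate each half by change of variables
  have hI1 : (∫ t in (0:ℝ)..(1/2), ⨆ x, |H t x|) = ∫ s in (0:ℝ)..1, ⨆ x, |G s x| := by
    rw [intervalIntegral.integral_congr hEq1]
    have := intervalIntegral.integral_comp_smul_deriv (a := 0) (b := 1/2)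
      (f := τ₂) (f' := τ₂') (g := fun s => ⨆ x, |G s x|)
      (fun t ht => hderiv₂ t (hsub1 (by rwa [uIcc_of_le h0] at ht)))
      (by rw [uIcc_of_le h0]; exact hcont₂.mono hsub1) gcont
    simp only [smul_eq_mul, Function.comp] at this
    rw [this, hτ₂0, hτ₂half]
  have hI2 : (∫ t in ((1:ℝ)/2)..1, ⨆ x, |H t x|) = ∫ s in (0:ℝ)..1, ⨆ x, |F s x| := by
    rw [intervalIntegral.integral_congr hEq2]
    have := intervalIntegral.integral_comp_smul_deriv (a := 1/2) (b := 1)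
      (f := τ₁) (f' := τ₁') (g := fun s => ⨆ x, |F s x|)
      (fun t ht => hderiv₁ t (hsub2 (by rwa [uIcc_of_le h1] at ht)))
      (by rw [uIcc_of_le h1]; exact hcont₁.mono hsub2) fcont
    simp only [smul_eq_mul, Function.comp] at this
    rw [this, hτ₁1, hτ₁half]
  rw [hsplit, hI1, hI2, add_comm]
end
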